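/- Let A_1, …, A_n be positive semidefinite real symmetric matrices with A_1 + ⋯ + A_n ⪯ n·I. Then −n(n-1)·I ⪯ Σ_{i≠j} A_i A_j. -/

import Mathlib

open Matrix Finset

section Aux
variable {d : ℕ}

lemma psd_add {M N : Matrix (Fin d) (Fin d) ℝ} (hM : M.PosSemidef) (hN : N.PosSemidef) :
    (M + N).PosSemidef :=
  ⟨hM.1.add hN.1, fun x => by
    simpa [mul_add, add_mul] using add_nonneg (hM.2 x) (hN.2 x)⟩

lemma psd_smul {M : Matrix (Fin d) (Fin d) ℝ} (hM : M.PosSemidef) {c : ℝ} (hc : 0 ≤ c) :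
    (c • M).PosSemidef := by
  refine ⟨?_, fun x => ?_⟩
  · unfold Matrix.IsHermitian
    rw [conjTranspose_smul, hM.1]
    congr 1
  · exact (hM.smul hc).2 x

lemma psd_sum {ι : Type*} (s : Finset ι) (f : ι → Matrix (Fin d) (Fin d) ℝ)
    (hf : ∀ i ∈ s, (f i).PosSemidef) : (∑ i ∈ s, f i).PosSemidef := by
  classical
  induction s using Finset.induction_on with
  | empty => simpa using Matrix.PosSemidef.zero
  | insert _ _ h ih =>
    rw [Finset.sum_insert h]
    exact psd_add (hf _ (Finset.mem_insert_self _ _))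
      (ih fun i hi => hf i (Finset.mem_insert_of_mem hi))

lemma psd_one : (1 : Matrix (Fin d) (Fin d) ℝ).PosSemidef :=
  Matrix.PosDef.one.posSemidef

end Aux

theorem stmt6 {d n : ℕ} (A : Fin n → Matrix (Fin d) (Fin d) ℝ)
    (hA : ∀ i, (A i).PosSemidef)
    (hsum : ((n : ℝ) • (1 : Matrix (Fin d) (Fin d) ℝ) - ∑ i, A i).PosSemidef) :
    ((∑ p ∈ Finset.univ.filter (fun p : Fin n × Fin n => p.1 ≠ p.2), A p.1 * A p.2) -
      (-((n : ℝ) * ((n : ℝ) - 1))) • (1 : Matrix (Fin d) (Fin d) ℝ)).PosSemidef := by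
  classical
  rcases lt_or_ge n 2 with hn | hn
  · interval_cases n
    · simp only [Nat.cast_zero, zero_mul, neg_zero, zero_smul, sub_zero]
      have he : (univ.filter (fun p : Fin 0 × Fin 0 => p.1 ≠ p.2)) = ∅ := by decide
      rw [he, Finset.sum_empty]
      exact Matrix.PosSemidef.zero
    · have he : (univ.filter (fun p : Fin 1 × Fin 1 => p.1 ≠ p.2)) = ∅ := by decide
      rw [he, Finset.sum_empty]
      norm_num
      exact Matrix.PosSemidef.zero
  · set S : Matrix (Fin d) (Fin d) ℝ := ∑ i, A i with hSdef
    -- the off-diagonal sum equals S*S - ∑ A i * A i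
    have hX : (∑ p ∈ Finset.univ.filter (fun p : Fin n × Fin n => p.1 ≠ p.2),
        A p.1 * A p.2) = S * S - ∑ i, A i * A i := by
      have htot : (∑ p : Fin n × Fin n, A p.1 * A p.2) = S * S := by
        rw [hSdef, Finset.sum_mul_sum, Fintype.sum_prod_type]
      have hdiag : (∑ p ∈ Finset.univ.filter (fun p : Fin n × Fin n => p.1 = p.2),
          A p.1 * A p.2) = ∑ i, A i * A i := by
        rw [Finset.sum_filter, Fintype.sum_prod_type]
        simp
      have hsplit := Finset.sum_filter_add_sum_filter_not Finset.univ
        (fun p : Fin n × Fin n => p.1 = p.2) (fun p => A p.1 * A p.2)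
      rw [hdiag] at hsplit
      have : (∑ p ∈ Finset.univ.filter (fun p : Fin n × Fin n => ¬ p.1 = p.2),
          A p.1 * A p.2) = S * S - ∑ i, A i * A i := by
        rw [← htot, ← hsplit]; abel
      simpa using this
    rw [hX, neg_smul, sub_neg_eq_add]
    -- decomposition into psd pieces
    have hc : (S * S - ∑ i, A i * A i) + ((n : ℝ) * ((n : ℝ) - 1)) • (1 : Matrix (Fin d) (Fin d) ℝ)
        = (∑ i, ((n : ℝ) • A i - A i * A i)) +
          ((S - ((n : ℝ) - 1) • 1) * (S - ((n : ℝ) - 1) • 1) +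
            (((n : ℝ) - 1) • (1 : Matrix (Fin d) (Fin d) ℝ) + ((n : ℝ) - 2) • S)) := by
      rw [Finset.sum_sub_distrib, ← Finset.smul_sum, ← hSdef]
      simp only [sub_mul, mul_sub, smul_mul_assoc, mul_smul_comm, one_mul, mul_one, smul_smul]
      module
    rw [hc]
    -- each piece is psd
    have hterm : ∀ i, ((n : ℝ) • A i - A i * A i).PosSemidef := by
      intro i
      have hni : ((n : ℝ) • (1 : Matrix (Fin d) (Fin d) ℝ) - A i).PosSemidef := by
        have he : (n : ℝ) • (1 : Matrix (Fin d) (Fin d) ℝ) - A i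
            = ((n : ℝ) • 1 - S) + ∑ j ∈ univ.erase i, A j := by
          rw [Finset.sum_erase_eq_sub (Finset.mem_univ i), ← hSdef]; abel
        rw [he]
        exact psd_add hsum (psd_sum _ _ fun j _ => hA j)
      set R := (open scoped MatrixOrder in CFC.sqrt (A i)) with hRdef
      have hRR : R * R = A i := by
        open scoped MatrixOrder in exact CFC.sqrt_mul_sqrt_self (A i) (hA i).nonneg
      have hRh : Rᴴ = R := by
        open scoped MatrixOrder in exact (CFC.sqrt_nonneg (A i)).posSemidef.1
      have hRA : R * A i * R = A i * A i := by
        rw [← hRR]; noncomm_ring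
      have hkey : (n : ℝ) • A i - A i * A i = Rᴴ * ((n : ℝ) • 1 - A i) * R := by
        rw [hRh, mul_sub, sub_mul, mul_smul_comm, smul_mul_assoc,
          mul_one, hRR, hRA]
      rw [hkey]
      exact hni.conjTranspose_mul_mul_same R
    have hM : (S - ((n : ℝ) - 1) • (1 : Matrix (Fin d) (Fin d) ℝ)).IsHermitian := by
      exact ((psd_sum univ A fun i _ => hA i).1).sub (by
        unfold Matrix.IsHermitian
        rw [conjTranspose_smul, Matrix.conjTranspose_one]
        congr 1)
    refine psd_add (psd_sum _ _ fun i _ => hterm i) (psd_add ?_ (psd_add ?_ ?_))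
    · have := Matrix.posSemidef_conjTranspose_mul_self (S - ((n : ℝ) - 1) • 1)
      rwa [hM] at this
    · exact psd_smul psd_one (by
        have h2 : (2:ℝ) ≤ (n:ℝ) := by exact_mod_cast hn
        linarith)
    · exact psd_smul (psd_sum univ A fun i _ => hA i) (by
        have h2 : (2:ℝ) ≤ (n:ℝ) := by exact_mod_cast hn
        linarith)
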